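/- For every natural number p ≥ 1, the polynomial ∑_{k=0}^{p} C(p+1, k) · B'_k · X^{p+1−k} ∈ ℚ[X] (which represents (p+1)·∑_{k=1}^{n} k^p) is divisible by X·(X+1) in ℚ[X]. -/

import Mathlib

open Polynomial in
/-- For `p ≥ 1`, the polynomial `∑_{k=0}^{p} C(p+1, k) · B'_k · X^{p+1-k}`
(representing `(p+1)·∑_{k=1}^{n} k^p`, original convention `B'_1 = +1/2`)
is divisible by `X·(X+1)` in `ℚ[X]`. -/
theorem sum_of_powers_poly_divisible (p : ℕ) (hp : 1 ≤ p) :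
    (X * (X + 1)) ∣
      ∑ k ∈ Finset.range (p + 1),
        C ((Nat.choose (p + 1) k : ℚ) * bernoulli' k) * X ^ (p + 1 - k) := by
  have hcop : IsCoprime (X : ℚ[X]) (X + 1) := by
    refine ⟨-1, 1, by ring⟩
  refine hcop.mul_dvd ?_ ?_
  · refine Finset.dvd_sum fun k hk => ?_
    have hk' : k < p + 1 := Finset.mem_range.mp hk
    have : 1 ≤ p + 1 - k := by omega
    exact Dvd.dvd.mul_left (dvd_pow_self X (by omega)) _
  · have h : (X + 1 : ℚ[X]) = X - C (-1) := by simp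
    rw [h, dvd_iff_isRoot]
    simp only [IsRoot, eval_finset_sum, eval_mul, eval_C, eval_pow, eval_X]
    have key : ∀ k ∈ Finset.range (p + 1),
        (↑((p + 1).choose k) * bernoulli' k) * (-1 : ℚ) ^ (p + 1 - k)
          = (-1 : ℚ) ^ (p + 1) * (↑((p + 1).choose k) * _root_.bernoulli k) := by
      intro k hk
      have hk' : k < p + 1 := Finset.mem_range.mp hk
      have hpow : (-1 : ℚ) ^ (p + 1 - k) * (-1) ^ k = (-1) ^ (p + 1) := by
        rw [← pow_add]; congr 1; omega
      rw [bernoulli'_eq_bernoulli]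
      rw [← hpow]
      ring
    rw [Finset.sum_congr rfl key, ← Finset.mul_sum, _root_.sum_bernoulli]
    have : p + 1 ≠ 1 := by omega
    simp [this]
    omega
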